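/- Let G be a bipartite graph without isolated vertices. Then G is unmixed if and only if its vertices admit a partition V1 = {x_1,...,x_n}, V2 = {y_1,...,y_n} such that (1) x_i y_i is an edge for all i, and (2) whenever x_i y_j and x_j y_k are edges for distinct i, j, k, then x_i y_k is an edge. -/

import Mathlib

set_option synthInstance.maxHeartbeats 1000000
set_option maxHeartbeats 1000000
open Classical
noncomputable section

/-- A (abstract) simplicial complex on vertex type `V`: a downward-closed
set of finite sets containing the empty set when nonempty is not required;
we only require downward closure. -/
def IsComplex {V : Type} (Δ : Set (Finset V)) : Prop :=
  ∀ F ∈ Δ, ∀ G : Finset V, G ⊆ F → G ∈ Δ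

/-- `F` is a facet (maximal face) of `Δ`. -/
def IsFacet {V : Type} (Δ : Set (Finset V)) (F : Finset V) : Prop :=
  F ∈ Δ ∧ ∀ G ∈ Δ, F ⊆ G → F = G

/-- A complex is pure if all facets have the same cardinality. -/
def IsPure {V : Type} (Δ : Set (Finset V)) : Prop :=
  ∀ F G : Finset V, IsFacet Δ F → IsFacet Δ G → F.card = G.card

/-- `Δ` has dimension `d - 1` iff the largest cardinality of a face is `d`. -/
def HasDimCard {V : Type} [Fintype V] (Δ : Set (Finset V)) (d : ℕ) : Prop :=
  (∃ F ∈ Δ, F.card = d) ∧ ∀ F ∈ Δ, F.card ≤ d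

/-- The link of a face `F` in `Δ`. -/
def linkC {V : Type} (Δ : Set (Finset V)) (F : Finset V) : Set (Finset V) :=
  { G | Disjoint G F ∧ G ∪ F ∈ Δ }

/-- The Stanley-Reisner ideal of `Δ` over `k`: generated by the monomials
supported on the non-faces of `Δ`. -/
def SRIdeal (k : Type) [Field k] {V : Type} [Fintype V] (Δ : Set (Finset V)) :
    Ideal (MvPolynomial V k) :=
  Ideal.span { m | ∃ F : Finset V, F ∉ Δ ∧ m = ∏ v ∈ F, MvPolynomial.X v }

/-- The Stanley-Reisner ring `k[Δ]`. -/
abbrev SRRing (k : Type) [Field k] {V : Type} [Fintype V] (Δ : Set (Finset V)) :=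
  MvPolynomial V k ⧸ SRIdeal k Δ

/-- `Δ` is Cohen-Macaulay over `k` iff its Stanley-Reisner ring admits a
regular sequence, contained in the irrelevant maximal ideal, whose length is
the Krull dimension of the ring (i.e. depth = dimension). -/
def IsCM (k : Type) [Field k] {V : Type} [Fintype V] (Δ : Set (Finset V)) : Prop :=
  ∃ rs : List (SRRing k Δ),
    (∀ r ∈ rs, r ∈ Ideal.span
      (Set.range fun v : V => Ideal.Quotient.mk (SRIdeal k Δ) (MvPolynomial.X v))) ∧
    RingTheory.Sequence.IsRegular (SRRing k Δ) rs ∧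
    (rs.length : WithBot (WithTop ℕ)) = ringKrullDim (SRRing k Δ)

/-- `Δ` is `CM_t` over `k`: pure, and the link of every face of cardinality
at least `t` is Cohen-Macaulay over `k`. -/
def IsCMt (k : Type) [Field k] {V : Type} [Fintype V] (Δ : Set (Finset V)) (t : ℕ) : Prop :=
  IsPure Δ ∧ ∀ F ∈ Δ, t ≤ F.card → IsCM k (linkC Δ F)

/-- The independence complex of a graph. -/
def indC {V : Type} (G : SimpleGraph V) : Set (Finset V) :=
  { F | ∀ u ∈ F, ∀ v ∈ F, ¬ G.Adj u v }

/-- A graph is unmixed if its independence complex is pure. -/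
def Unmixed {V : Type} (G : SimpleGraph V) : Prop := IsPure (indC G)

/-- The closed neighborhood `N[v]` of a vertex. -/
def closedNbhd {V : Type} (G : SimpleGraph V) (v : V) : Set V :=
  insert v (G.neighborSet v)

/-- The induced subgraph `G \ N[v]` on the complement of the closed
neighborhood of `v`. -/
def delNbhd {V : Type} (G : SimpleGraph V) (v : V) :
    SimpleGraph ((closedNbhd G v)ᶜ : Set V) :=
  SimpleGraph.induce _ G

/-- A pure order of a bipartite graph `G`, given by labelings
`x y : Fin n → V` of the two parts. -/
def IsPureOrder {V : Type} (G : SimpleGraph V) {n : ℕ} (x y : Fin n → V) : Prop :=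
  Function.Bijective (Sum.elim x y) ∧
  (∀ i j : Fin n, ¬ G.Adj (x i) (x j)) ∧
  (∀ i j : Fin n, ¬ G.Adj (y i) (y j)) ∧
  (∀ i : Fin n, G.Adj (x i) (y i)) ∧
  (∀ i j k : Fin n, i ≠ j → j ≠ k → i ≠ k →
    G.Adj (x i) (y j) → G.Adj (x j) (y k) → G.Adj (x i) (y k))

noncomputable instance fintypeOfSetCompl {V : Type} [Fintype V] (s : Set V) : Fintype s :=
  s.toFinite.fintype

/-- The join of two simplicial complexes on disjoint vertex sets. -/
def joinC {V W : Type} (Δ : Set (Finset V)) (Δ' : Set (Finset W)) :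
    Set (Finset (V ⊕ W)) :=
  { F | ∃ A ∈ Δ, ∃ B ∈ Δ',
      F = A.map ⟨Sum.inl, Sum.inl_injective⟩ ∪ B.map ⟨Sum.inr, Sum.inr_injective⟩ }

end

section AuxLemmas

variable {V : Type} [Fintype V] [DecidableEq V]

lemma mem_indC_iff {G : SimpleGraph V} {F : Finset V} :
    F ∈ indC G ↔ ∀ u ∈ F, ∀ v ∈ F, ¬ G.Adj u v := Iff.rfl

/-- Every independent set extends to a facet of the independence complex. -/
lemma exists_facet_ext (G : SimpleGraph V) {F : Finset V} (hF : F ∈ indC G) :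
    ∃ M, IsFacet (indC G) M ∧ F ⊆ M := by
  obtain ⟨M, hM, hmax⟩ := Set.Finite.exists_maximalFor (fun M : Finset V => M.card)
    {M | M ∈ indC G ∧ F ⊆ M} (Set.toFinite _) ⟨F, hF, subset_rfl⟩
  refine ⟨M, ⟨hM.1, ?_⟩, hM.2⟩
  intro G' hG' hsub
  exact Finset.eq_of_subset_of_card_le hsub
    (hmax ⟨hG', hM.2.trans hsub⟩ (Finset.card_le_card hsub))

/-- A facet of the independence complex dominates every outside vertex. -/
lemma facet_dominates {G : SimpleGraph V} {M : Finset V} (hM : IsFacet (indC G) M)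
    {v : V} (hv : v ∉ M) : ∃ u ∈ M, G.Adj v u := by
  by_contra h
  push_neg at h
  have hins : insert v M ∈ indC G := by
    intro a ha b hb
    rcases Finset.mem_insert.mp ha with ha | ha
    · rcases Finset.mem_insert.mp hb with hb | hb
      · rw [ha, hb]; exact G.irrefl
      · rw [ha]; exact h b hb
    · rcases Finset.mem_insert.mp hb with hb | hb
      · rw [hb]; exact fun hadj => h a ha hadj.symm
      · exact hM.1 a ha b hb
  have heq := hM.2 _ hins (Finset.subset_insert _ _)
  exact hv (heq ▸ Finset.mem_insert_self v M)

/-- For a bijective `Sum.elim x y`, every vertex has a unique index. -/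
lemma exists_idx {n : ℕ} {x y : Fin n → V}
    (hbij : Function.Bijective (Sum.elim x y)) :
    ∃ idx : V → Fin n, ∀ v : V,
      (v = x (idx v) ∨ v = y (idx v)) ∧ ∀ m : Fin n, (v = x m ∨ v = y m) → m = idx v := by
  have key : ∀ v : V, ∃ l : Fin n,
      (v = x l ∨ v = y l) ∧ ∀ m : Fin n, (v = x m ∨ v = y m) → m = l := by
    intro v
    obtain ⟨s, hs⟩ := hbij.2 v
    cases s with
    | inl l =>
      refine ⟨l, Or.inl hs.symm, ?_⟩
      intro m hm
      rcases hm with hm | hm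
      · exact Sum.inl.inj (hbij.1 (show Sum.elim x y (.inl m) = Sum.elim x y (.inl l) from
          by simpa using hm.symm.trans hs.symm))
      · exact absurd (hbij.1 (show Sum.elim x y (.inr m) = Sum.elim x y (.inl l) from
          by simpa using hm.symm.trans hs.symm)) (by simp)
    | inr l =>
      refine ⟨l, Or.inr hs.symm, ?_⟩
      intro m hm
      rcases hm with hm | hm
      · exact absurd (hbij.1 (show Sum.elim x y (.inl m) = Sum.elim x y (.inr l) from
          by simpa using hm.symm.trans hs.symm)) (by simp)
      · exact Sum.inr.inj (hbij.1 (show Sum.elim x y (.inr m) = Sum.elim x y (.inr l) from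
          by simpa using hm.symm.trans hs.symm))
  exact ⟨fun v => (key v).choose, fun v => (key v).choose_spec⟩

/-- Upper bound on the size of an independent set via a perfect matching. -/
lemma indep_card_le {G : SimpleGraph V} {n : ℕ} {x y : Fin n → V}
    (hbij : Function.Bijective (Sum.elim x y)) (hxy : ∀ i : Fin n, G.Adj (x i) (y i))
    {M : Finset V} (hM : M ∈ indC G) {t : Finset (Fin n)}
    (ht : ∀ v ∈ M, ∀ l : Fin n, (v = x l ∨ v = y l) → l ∈ t) :
    M.card ≤ t.card := by
  obtain ⟨idx, hidx⟩ := exists_idx hbij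
  refine Finset.card_le_card_of_injOn idx (fun v hv => ht v hv _ (hidx v).1) ?_
  intro u hu v hv he
  rcases (hidx u).1 with h1 | h1 <;> rcases (hidx v).1 with h2 | h2 <;>
    rw [he] at h1
  · exact h1.trans h2.symm
  · exact absurd (show G.Adj u v from by rw [h2, h1]; exact hxy (idx v)) (hM u hu v hv)
  · exact absurd (show G.Adj v u from by rw [h2, h1]; exact hxy (idx v))
      (fun hadj => hM u hu v hv hadj.symm)
  · exact h1.trans h2.symm

/-- Every facet of the independence complex of a graph with a pure order has
cardinality `n`. -/
lemma facet_card_of_pureOrder {G : SimpleGraph V} {n : ℕ} {x y : Fin n → V}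
    (h : IsPureOrder G x y) {M : Finset V} (hM : IsFacet (indC G) M) : M.card = n := by
  obtain ⟨hbij, hxx, hyy, hxy, htr⟩ := h
  have hxinj : Function.Injective x := fun a b hab =>
    Sum.inl.inj (hbij.1 (show Sum.elim x y (.inl a) = Sum.elim x y (.inl b) by simpa using hab))
  have hyinj : Function.Injective y := fun a b hab =>
    Sum.inr.inj (hbij.1 (show Sum.elim x y (.inr a) = Sum.elim x y (.inr b) by simpa using hab))
  have hxny : ∀ a b : Fin n, x a ≠ y b := fun a b hab =>
    absurd (hbij.1 (show Sum.elim x y (.inl a) = Sum.elim x y (.inr b) by simpa using hab))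
      (by simp)
  have hle : M.card ≤ n := by
    have := indep_card_le hbij hxy hM.1 (t := Finset.univ)
      (fun v _ l _ => Finset.mem_univ l)
    simpa using this
  have hge : n ≤ M.card := by
    have hmem : ∀ l : Fin n, x l ∈ M ∨ y l ∈ M := by
      intro l
      by_contra hc
      push_neg at hc
      obtain ⟨hxl, hyl⟩ := hc
      obtain ⟨u, hu, hadju⟩ := facet_dominates hM hxl
      obtain ⟨w, hw, hadjw⟩ := facet_dominates hM hyl
      obtain ⟨idx, hidx⟩ := exists_idx hbij
      have hu' : u = y (idx u) := by
        rcases (hidx u).1 with h1 | h1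
        · exact absurd (h1 ▸ hadju) (hxx l (idx u))
        · exact h1
      have hw' : w = x (idx w) := by
        rcases (hidx w).1 with h1 | h1
        · exact h1
        · exact absurd (h1 ▸ hadjw) (hyy l (idx w))
      have hyjM : y (idx u) ∈ M := hu' ▸ hu
      have hxkM : x (idx w) ∈ M := hw' ▸ hw
      have hjl : idx u ≠ l := fun hj => hyl (hj ▸ hyjM)
      have hkl : idx w ≠ l := fun hk => hxl (hk ▸ hxkM)
      have hadjxlyj : G.Adj (x l) (y (idx u)) := hu' ▸ hadju
      have hadjxkyl : G.Adj (x (idx w)) (y l) := (hw' ▸ hadjw).symm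
      by_cases hkj : idx w = idx u
      · exact hM.1 _ hxkM _ hyjM (by rw [hkj]; exact hxy (idx u))
      · exact hM.1 _ hxkM _ hyjM (htr (idx w) l (idx u) hkl (Ne.symm hjl) hkj hadjxkyl hadjxlyj)
    have hmaps : ∀ l ∈ (Finset.univ : Finset (Fin n)),
        (if x l ∈ M then x l else y l) ∈ M := by
      intro l _
      split_ifs with h1
      · exact h1
      · exact (hmem l).resolve_left h1
    have hinj : Set.InjOn (fun l : Fin n => if x l ∈ M then x l else y l)
        (Finset.univ : Finset (Fin n)) := by
      intro a _ b _ hab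
      simp only at hab
      split_ifs at hab with h1 h2 h2
      · exact hxinj hab
      · exact absurd hab (hxny a b)
      · exact absurd hab.symm (hxny b a)
      · exact hyinj hab
    have := Finset.card_le_card_of_injOn _ hmaps hinj
    simpa using this
  exact le_antisymm hle hge

end AuxLemmas

/-- Villarreal's characterization of unmixed bipartite graphs. -/
theorem unmixed_bipartite_iff_pure_order {V : Type} [Fintype V] [DecidableEq V]
    (G : SimpleGraph V) (hbip : G.Colorable 2) (hiso : ∀ v : V, ∃ u, G.Adj v u) :
    Unmixed G ↔ ∃ (n : ℕ) (x y : Fin n → V), IsPureOrder G x y := by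
  constructor
  · intro hu
    obtain ⟨c⟩ := hbip
    classical
    set V1 : Finset V := Finset.univ.filter (fun v => c v = 0) with hV1def
    set V2 : Finset V := Finset.univ.filter (fun v => c v = 1) with hV2def
    have hne0 : ∀ a : Fin 2, a ≠ 0 → a = 1 := by decide
    have hne1 : ∀ a : Fin 2, a ≠ 1 → a = 0 := by decide
    have hmem1 : ∀ v, v ∈ V1 ↔ c v = 0 := fun v => by simp [hV1def]
    have hmem2 : ∀ v, v ∈ V2 ↔ c v = 1 := fun v => by simp [hV2def]
    have hcov : ∀ v : V, v ∈ V1 ∨ v ∈ V2 := fun v => by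
      by_cases h : c v = 0
      · exact Or.inl ((hmem1 v).mpr h)
      · exact Or.inr ((hmem2 v).mpr (hne0 _ h))
    have hVdisj : Disjoint V1 V2 := by
      rw [Finset.disjoint_left]
      intro v h1 h2
      rw [hmem1] at h1; rw [hmem2] at h2; rw [h1] at h2; exact absurd h2 (by decide)
    have hV1ind : (V1 : Finset V) ∈ indC G := by
      intro u hu' v hv' hadj
      exact c.valid hadj (((hmem1 u).mp hu').trans ((hmem1 v).mp hv').symm)
    have hV2ind : (V2 : Finset V) ∈ indC G := by
      intro u hu' v hv' hadj
      exact c.valid hadj (((hmem2 u).mp hu').trans ((hmem2 v).mp hv').symm)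
    have hV1fac : IsFacet (indC G) V1 := by
      refine ⟨hV1ind, fun G' hG' hsub => Finset.Subset.antisymm hsub ?_⟩
      intro v hv
      by_contra hvV1
      have hcv : c v = 1 := hne0 _ (fun h => hvV1 ((hmem1 v).mpr h))
      obtain ⟨u, hadj⟩ := hiso v
      have hu1 : u ∈ V1 := (hmem1 u).mpr (hne1 _ (fun h => c.valid hadj (hcv.trans h.symm)))
      exact hG' v hv u (hsub hu1) hadj
    have hV2fac : IsFacet (indC G) V2 := by
      refine ⟨hV2ind, fun G' hG' hsub => Finset.Subset.antisymm hsub ?_⟩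
      intro v hv
      by_contra hvV2
      have hcv : c v = 0 := hne1 _ (fun h => hvV2 ((hmem2 v).mpr h))
      obtain ⟨u, hadj⟩ := hiso v
      have hu2 : u ∈ V2 := (hmem2 u).mpr (hne0 _ (fun h => c.valid hadj (hcv.trans h.symm)))
      exact hG' v hv u (hsub hu2) hadj
    have hfacn : ∀ M, IsFacet (indC G) M → M.card = V1.card := fun M hM => hu M V1 hM hV1fac
    have hV2card : V2.card = V1.card := hfacn V2 hV2fac
    -- Hall's condition
    have hall : ∀ s : Finset ↥V1,
        s.card ≤ (s.biUnion (fun a => G.neighborFinset (a : V))).card := by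
      intro s
      set N := s.biUnion (fun a : ↥V1 => G.neighborFinset (a : V)) with hNdef
      have hNV2 : N ⊆ V2 := by
        intro v hv
        rw [hNdef, Finset.mem_biUnion] at hv
        obtain ⟨a, _, hv⟩ := hv
        rw [SimpleGraph.mem_neighborFinset] at hv
        have ha1 : c (a : V) = 0 := (hmem1 _).mp a.2
        exact (hmem2 v).mpr (hne0 _ (fun h => c.valid hv (ha1.trans h.symm)))
      have himg : ∀ w, w ∈ s.image (fun a : ↥V1 => (a : V)) →
          w ∈ V1 ∧ ∀ z, G.Adj w z → z ∈ N := by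
        intro w hw
        rw [Finset.mem_image] at hw
        obtain ⟨a, ha, rfl⟩ := hw
        exact ⟨a.2, fun z hz => Finset.mem_biUnion.mpr
          ⟨a, ha, (SimpleGraph.mem_neighborFinset _ _ _).mpr hz⟩⟩
      have hFind : (s.image (fun a : ↥V1 => (a : V)) ∪ (V2 \ N)) ∈ indC G := by
        intro u hu' v hv' hadj
        rw [Finset.mem_union] at hu' hv'
        rcases hu' with hu' | hu' <;> rcases hv' with hv' | hv'
        · exact hV1ind u (himg u hu').1 v (himg v hv').1 hadj
        · exact (Finset.mem_sdiff.mp hv').2 ((himg u hu').2 v hadj)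
        · exact (Finset.mem_sdiff.mp hu').2 ((himg v hv').2 u hadj.symm)
        · exact hV2ind u (Finset.mem_sdiff.mp hu').1 v (Finset.mem_sdiff.mp hv').1 hadj
      obtain ⟨M, hMfac, hFM⟩ := exists_facet_ext G hFind
      have hMn : M.card = V1.card := hfacn M hMfac
      have hsplit := Finset.card_filter_add_card_filter_not
        (s := M) (p := fun v => c v = 0)
      have h1 : s.card ≤ (M.filter (fun v => c v = 0)).card := by
        have hsub1 : s.image (fun a : ↥V1 => (a : V)) ⊆ M.filter (fun v => c v = 0) := by
          intro w hw
          refine Finset.mem_filter.mpr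
            ⟨hFM (Finset.mem_union_left _ hw), (hmem1 _).mp (himg w hw).1⟩
        calc s.card = (s.image (fun a : ↥V1 => (a : V))).card :=
              (Finset.card_image_of_injective _ Subtype.coe_injective).symm
          _ ≤ _ := Finset.card_le_card hsub1
      have h2 : V2.card - N.card ≤ (M.filter (fun v => ¬ c v = 0)).card := by
        have hsub2 : V2 \ N ⊆ M.filter (fun v => ¬ c v = 0) := by
          intro w hw
          refine Finset.mem_filter.mpr ⟨hFM (Finset.mem_union_right _ hw), ?_⟩
          have h2' := (hmem2 w).mp (Finset.mem_sdiff.mp hw).1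
          rw [h2']
          decide
        calc V2.card - N.card = (V2 \ N).card := (Finset.card_sdiff_of_subset hNV2).symm
          _ ≤ _ := Finset.card_le_card hsub2
      have hNle : N.card ≤ V2.card := Finset.card_le_card hNV2
      omega
    obtain ⟨f, hfinj, hf⟩ :=
      (Finset.all_card_le_biUnion_card_iff_exists_injective
        (fun a : ↥V1 => G.neighborFinset (a : V))).mp hall
    have hfadj : ∀ a : ↥V1, G.Adj (a : V) (f a) := fun a =>
      (SimpleGraph.mem_neighborFinset _ _ _).mp (hf a)
    have hfV2 : ∀ a : ↥V1, f a ∈ V2 := fun a =>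
      (hmem2 _).mpr (hne0 _ (fun h =>
        c.valid (hfadj a) (((hmem1 _).mp a.2).trans h.symm)))
    have hcard1 : Fintype.card ↥V1 = V1.card := Fintype.card_coe V1
    let e : ↥V1 ≃ Fin V1.card := Fintype.equivFinOfCardEq hcard1
    set xx : Fin V1.card → V := fun i => ((e.symm i : ↥V1) : V) with hxxdef
    set yy : Fin V1.card → V := fun i => f (e.symm i) with hyydef
    have hxxV1 : ∀ i, xx i ∈ V1 := fun i => (e.symm i).2
    have hyyV2 : ∀ i, yy i ∈ V2 := fun i => hfV2 (e.symm i)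
    have hbij : Function.Bijective (Sum.elim xx yy) := by
      rw [Fintype.bijective_iff_injective_and_card]
      constructor
      · intro a b hab
        cases a with
        | inl a =>
          cases b with
          | inl b =>
            simp only [Sum.elim_inl] at hab
            exact congrArg Sum.inl (e.symm.injective (Subtype.coe_injective hab))
          | inr b =>
            simp only [Sum.elim_inl, Sum.elim_inr] at hab
            exact absurd (hab ▸ hxxV1 a) (Finset.disjoint_right.mp hVdisj (hyyV2 b))
        | inr a =>
          cases b with
          | inl b =>
            simp only [Sum.elim_inl, Sum.elim_inr] at hab
            exact absurd (hab ▸ hyyV2 a) (Finset.disjoint_left.mp hVdisj (hxxV1 b))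
          | inr b =>
            simp only [Sum.elim_inr] at hab
            exact congrArg Sum.inr (e.symm.injective (hfinj hab))
      · have hunion : V1 ∪ V2 = Finset.univ :=
          Finset.eq_univ_iff_forall.mpr (fun v => Finset.mem_union.mpr (hcov v))
        have hcV : Fintype.card V = V1.card + V2.card := by
          rw [← Finset.card_univ, ← hunion, Finset.card_union_of_disjoint hVdisj]
        simp [Fintype.card_sum, Fintype.card_fin, hcV, hV2card]
    have hxxadj : ∀ i j, ¬ G.Adj (xx i) (xx j) := fun i j =>
      hV1ind _ (hxxV1 i) _ (hxxV1 j)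
    have hyyadj : ∀ i j, ¬ G.Adj (yy i) (yy j) := fun i j =>
      hV2ind _ (hyyV2 i) _ (hyyV2 j)
    have hmatch : ∀ i, G.Adj (xx i) (yy i) := fun i => hfadj (e.symm i)
    have htrans : ∀ i j k : Fin V1.card, i ≠ j → j ≠ k → i ≠ k →
        G.Adj (xx i) (yy j) → G.Adj (xx j) (yy k) → G.Adj (xx i) (yy k) := by
      intro i j k hij hjk hik h1 h2
      by_contra h3
      have hind : ({xx i, yy k} : Finset V) ∈ indC G := by
        intro u hu' v hv'
        rw [Finset.mem_insert, Finset.mem_singleton] at hu' hv'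
        rcases hu' with rfl | rfl <;> rcases hv' with rfl | rfl
        · exact G.irrefl
        · exact h3
        · exact fun h => h3 h.symm
        · exact G.irrefl
      obtain ⟨M, hMfac, hFM⟩ := exists_facet_ext G hind
      have hxiM : xx i ∈ M := hFM (by simp)
      have hykM : yy k ∈ M := hFM (by simp)
      have hxjM : xx j ∉ M := fun h => hMfac.1 _ h _ hykM h2
      have hyjM : yy j ∉ M := fun h => hMfac.1 _ hxiM _ h h1
      have hcard := hfacn M hMfac
      have hle : M.card ≤ (Finset.univ.erase j).card := by
        refine indep_card_le hbij hmatch hMfac.1 ?_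
        intro v hv l hl
        refine Finset.mem_erase.mpr ⟨?_, Finset.mem_univ l⟩
        rintro rfl
        rcases hl with rfl | rfl
        · exact hxjM hv
        · exact hyjM hv
      rw [Finset.card_erase_of_mem (Finset.mem_univ j), Finset.card_univ,
        Fintype.card_fin] at hle
      have hpos : 0 < V1.card := j.pos
      omega
    exact ⟨V1.card, xx, yy, hbij, hxxadj, hyyadj, hmatch, htrans⟩
  · rintro ⟨n, x, y, hpo⟩
    intro F F' hF hF'
    rw [facet_card_of_pureOrder hpo hF, facet_card_of_pureOrder hpo hF']
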